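/- arXiv:0710.3722 — 10 statements merged into one kernel-verified Lean document; each statement's English description precedes it below -/
import Mathlib

section
/- Let Y be a topological space with an equivalence relation ~Y whose classes are path-connected. Let Y^I_S denote the space of continuous paths ω : [0,1] → Y whose image is contained in a single equivalence class, with the compact-open topology, and with the relation ω ~ ω' iff ω(0) ~Y ω'(0). Then the evaluation map p₁ : Y^I_S → Y, ω ↦ ω(1), is a stratified map having the stratified homotopy lifting property with respect to all stratified spaces. -/
open unitInterval

/-- A stratified map: continuous and compatible with the equivalence relations. -/
def IsStratMap {X Y : Type} [TopologicalSpace X] [TopologicalSpace Y]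
    (rX : X → X → Prop) (rY : Y → Y → Prop) (f : X → Y) : Prop :=
  Continuous f ∧ ∀ x x' : X, rX x x' → rY (f x) (f x')

/-- A stratified homotopy: `X × I` carries the product relation with `I` trivially
stratified, i.e. `(x,t) ∼ (x',t') ↔ x ∼ x'`. -/
def IsStratHomotopy {X Y : Type} [TopologicalSpace X] [TopologicalSpace Y]
    (rX : X → X → Prop) (rY : Y → Y → Prop) (H : X × I → Y) : Prop :=
  Continuous H ∧ ∀ (x x' : X) (t t' : I), rX x x' → rY (H (x, t)) (H (x', t'))

/-- Two maps are `S`-homotopic if a stratified homotopy joins them. -/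
def SHomotopic {X Y : Type} [TopologicalSpace X] [TopologicalSpace Y]
    (rX : X → X → Prop) (rY : Y → Y → Prop) (f g : X → Y) : Prop :=
  ∃ H : X × I → Y, IsStratHomotopy rX rY H ∧ (∀ x, H (x, 0) = f x) ∧ (∀ x, H (x, 1) = g x)

/-- A stratified weak equivalence: a stratified map with a two-sided inverse up to
stratified homotopy. -/
def IsStratWeakEquiv {X Y : Type} [TopologicalSpace X] [TopologicalSpace Y]
    (rX : X → X → Prop) (rY : Y → Y → Prop) (f : X → Y) : Prop :=
  IsStratMap rX rY f ∧ ∃ g : Y → X, IsStratMap rY rX g ∧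
    SHomotopic rY rY (f ∘ g) id ∧ SHomotopic rX rX (g ∘ f) id

/-- The stratified homotopy lifting property with respect to all stratified spaces
(topological spaces with an equivalence relation with path-connected classes). -/
def HasSHLP {E B : Type} [TopologicalSpace E] [TopologicalSpace B]
    (rE : E → E → Prop) (rB : B → B → Prop) (p : E → B) : Prop :=
  ∀ (Z : Type) (_ : TopologicalSpace Z) (rZ : Z → Z → Prop), Equivalence rZ →
    (∀ z : Z, IsPathConnected {z' | rZ z z'}) →
    ∀ h : Z → E, IsStratMap rZ rE h →
    ∀ H : Z × I → B, IsStratHomotopy rZ rB H →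
    (∀ z, H (z, 0) = p (h z)) →
    ∃ H' : Z × I → E, IsStratHomotopy rZ rE H' ∧
      (∀ z t, p (H' (z, t)) = H (z, t)) ∧ (∀ z, H' (z, 0) = h z)

/-- A stratified fibration. -/
def IsStratFibration {E B : Type} [TopologicalSpace E] [TopologicalSpace B]
    (rE : E → E → Prop) (rB : B → B → Prop) (p : E → B) : Prop :=
  IsStratMap rE rB p ∧ HasSHLP rE rB p

/-- The stratified path space `Y^I_S`: continuous paths contained in a single stratum,
with the compact-open topology. -/
abbrev SPath (Y : Type) [TopologicalSpace Y] (rY : Y → Y → Prop) : Type :=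
  {ω : C(I, Y) // ∀ t t' : I, rY (ω t) (ω t')}

/-- The stratification of the path space: two paths are equivalent iff they lie in the
same stratum. -/
def SPathRel {Y : Type} [TopologicalSpace Y] (rY : Y → Y → Prop)
    (ω ω' : SPath Y rY) : Prop :=
  rY (ω.1 0) (ω'.1 0)

/-- The stratification induced on a subset `U`: strata are the connected components of
the intersections of `U` with the strata of `X`. -/
def relInduced {X : Type} [TopologicalSpace X] (rX : X → X → Prop) (U : Set X)
    (x x' : U) : Prop :=
  (x' : X) ∈ connectedComponentIn {y | y ∈ U ∧ rX (x : X) y} (x : X)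

/-- A subset `U` is `A`-categorical: there is a stratified homotopy (for the induced
stratification on `U`) from the inclusion of `U` to a map with values in `A`. -/
def ACat {X : Type} [TopologicalSpace X] (rX : X → X → Prop) (A U : Set X) : Prop :=
  ∃ H : U × I → X, IsStratHomotopy (relInduced rX U) rX H ∧
    (∀ x : U, H (x, 0) = x) ∧ (∀ x : U, H (x, 1) ∈ A)

/-- `X` is covered by `n+1` open `A`-categorical sets. -/
def OcatLe {X : Type} [TopologicalSpace X] (rX : X → X → Prop) (A : Set X) (n : ℕ) : Prop :=
  ∃ U : Fin (n + 1) → Set X, (∀ i, IsOpen (U i)) ∧ (∀ x, ∃ i, x ∈ U i) ∧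
    ∀ i, ACat rX A (U i)

/-- The open LS-category `Ocat(X, A, F_X)` of a stratified pair, as an extended natural
number (`⊤` if no finite categorical cover exists). -/
noncomputable def Ocat {X : Type} [TopologicalSpace X] (rX : X → X → Prop) (A : Set X) : ℕ∞ :=
  sInf {c : ℕ∞ | ∃ n : ℕ, c = (n : ℕ∞) ∧ OcatLe rX A n}

/-- The `n`-th fat wedge of the pair `(X, A)`. -/
def FatWedge {X : Type} (A : Set X) (n : ℕ) : Set (Fin (n + 1) → X) :=
  {x | ∃ k, x k ∈ A}

/-- The product stratification on `X^{n+1}`. -/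
def relPi {X : Type} (rX : X → X → Prop) {n : ℕ} (x y : Fin (n + 1) → X) : Prop :=
  ∀ i, rX (x i) (y i)

/-- The diagonal factors up to stratified homotopy through the `n`-th fat wedge. -/
def WhcatLe {X : Type} [TopologicalSpace X] (rX : X → X → Prop) (A : Set X) (n : ℕ) : Prop :=
  ∃ r : X → (Fin (n + 1) → X), IsStratMap rX (relPi rX) r ∧
    (∀ x, r x ∈ FatWedge A n) ∧ SHomotopic rX (relPi rX) (fun x _ => x) r

/-- The Whitehead LS-category of a stratified pair. -/
noncomputable def Whcat {X : Type} [TopologicalSpace X] (rX : X → X → Prop) (A : Set X) : ℕ∞ :=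
  sInf {c : ℕ∞ | ∃ n : ℕ, c = (n : ℕ∞) ∧ WhcatLe rX A n}

/-- The `n`-th Ganea space of the pair `(X, A)`: `(n+1)`-tuples of stratified paths with a
common endpoint, one of which starts in `A`. -/
def GaneaSet {X : Type} [TopologicalSpace X] (rX : X → X → Prop) (A : Set X) (n : ℕ) :
    Set (Fin (n + 1) → SPath X rX) :=
  {α | (∀ i, (α i).1 1 = (α 0).1 1) ∧ ∃ k, (α k).1 0 ∈ A}

/-- The stratification on the Ganea space, induced by the product of path-space
stratifications. -/
def relGanea {X : Type} [TopologicalSpace X] (rX : X → X → Prop) (A : Set X) (n : ℕ)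
    (α β : GaneaSet rX A n) : Prop :=
  ∀ i, rX ((α.1 i).1 0) ((β.1 i).1 0)

/-- The `n`-th Ganea fibration `G_n(X,A,F_X) → X`. -/
def ganeaMap {X : Type} [TopologicalSpace X] (rX : X → X → Prop) (A : Set X) (n : ℕ)
    (α : GaneaSet rX A n) : X := (α.1 0).1 1

/-- The `n`-th Ganea fibration admits a stratified section. -/
def GcatLe {X : Type} [TopologicalSpace X] (rX : X → X → Prop) (A : Set X) (n : ℕ) : Prop :=
  ∃ s : X → GaneaSet rX A n, IsStratMap rX (relGanea rX A n) s ∧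
    ∀ x, ganeaMap rX A n (s x) = x

/-- The Ganea LS-category of a stratified pair. -/
noncomputable def Gcat {X : Type} [TopologicalSpace X] (rX : X → X → Prop) (A : Set X) : ℕ∞ :=
  sInf {c : ℕ∞ | ∃ n : ℕ, c = (n : ℕ∞) ∧ GcatLe rX A n}

/-- evaluation at 1 on the stratified path space is a stratified map with the
stratified homotopy lifting property. -/
theorem pathSpace_eval_isStratFibration {Y : Type} [TopologicalSpace Y]
    (rY : Y → Y → Prop) (hY : Equivalence rY)
    (hpc : ∀ y : Y, IsPathConnected {y' | rY y y'}) :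
    IsStratMap (SPathRel rY) rY (fun ω : SPath Y rY => ω.1 1) ∧
    HasSHLP (SPathRel rY) rY (fun ω : SPath Y rY => ω.1 1) := by
  constructor
  · refine ⟨(continuous_eval_const 1).comp continuous_subtype_val, ?_⟩
    intro ω ω' hrel
    exact hY.trans (hY.trans (ω.2 1 0) hrel) (ω'.2 0 1)
  · intro Z _ rZ hZeq hZpc h hh H HH h0
    have h0' : ∀ z, (h z).1 1 = H (z, 0) := fun z => (h0 z).symm
    set π : ℝ → I := Set.projIcc 0 1 zero_le_one with hπ
    have hπc : Continuous π := continuous_projIcc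
    set F : (Z × I) × I → Y := fun q =>
      if (1 + (q.1.2 : ℝ)) * (q.2 : ℝ) ≤ 1 then
        (h q.1.1).1 (π ((1 + (q.1.2 : ℝ)) * (q.2 : ℝ)))
      else H (q.1.1, π ((1 + (q.1.2 : ℝ)) * (q.2 : ℝ) - 1)) with hFdef
    have hu : Continuous fun q : (Z × I) × I => (1 + (q.1.2 : ℝ)) * (q.2 : ℝ) := by
      fun_prop
    have hcF : Continuous F := by
      apply Continuous.if_le
      · exact continuous_eval.comp
          ((continuous_subtype_val.comp (hh.1.comp
            (continuous_fst.comp continuous_fst))).prodMk (hπc.comp hu))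
      · exact HH.1.comp ((continuous_fst.comp continuous_fst).prodMk
          (hπc.comp (hu.sub continuous_const)))
      · exact hu
      · exact continuous_const
      · intro q hq
        rw [hq]
        have hπ1 : π (1 : ℝ) = 1 := by ext; simp [hπ]
        have hπ0 : π (0 : ℝ) = 0 := by ext; simp [hπ]
        rw [sub_self, hπ1, hπ0]
        exact h0' q.1.1
    have hstr : ∀ z t s, rY (F ((z, t), s)) (H (z, 0)) := by
      intro z t s
      by_cases hc : (1 + (t : ℝ)) * (s : ℝ) ≤ 1
      · simp only [hFdef, if_pos hc]
        rw [← h0' z]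
        exact (h z).2 _ 1
      · simp only [hFdef, if_neg hc]
        exact HH.2 z z _ 0 (hZeq.refl z)
    set Fc : C((Z × I) × I, Y) := ⟨F, hcF⟩ with hFc
    refine ⟨fun zt => ⟨Fc.curry zt,
      fun s s' => hY.trans (hstr zt.1 zt.2 s) (hY.symm (hstr zt.1 zt.2 s'))⟩, ⟨?_, ?_⟩, ?_, ?_⟩
    · exact Continuous.subtype_mk Fc.curry.continuous _
    · intro z z' t t' hr
      show rY (F ((z, t), 0)) (F ((z', t'), 0))
      have e0 : ∀ (z : Z) (t : I), F ((z, t), 0) = (h z).1 0 := by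
        intro z t
        simp only [hFdef, Set.Icc.coe_zero, mul_zero, zero_le_one, if_pos, hπ]
        rw [Set.projIcc_left]
        rfl
      rw [e0, e0]
      exact hh.2 z z' hr
    · intro z t
      show F ((z, t), 1) = H (z, t)
      by_cases hc : (1 + (t : ℝ)) * ((1 : I) : ℝ) ≤ 1
      · have ht : t = 0 := by
          ext
          have h1 : (t : ℝ) ≤ 0 := by
            simpa using hc
          exact le_antisymm h1 t.2.1
        subst ht
        simp only [hFdef, if_pos hc]
        have hπ1 : π (1 : ℝ) = 1 := by ext; simp [hπ]
        rw [show (1 + ((0 : I) : ℝ)) * ((1 : I) : ℝ) = 1 by norm_num, hπ1]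
        exact h0' z
      · simp only [hFdef, if_neg hc]
        congr 1
        ext
        · rfl
        · show ((π ((1 + (t : ℝ)) * ((1 : I) : ℝ) - 1)) : ℝ) = (t : ℝ)
          rw [show (1 + (t : ℝ)) * ((1 : I) : ℝ) - 1 = (t : ℝ) by norm_num]
          rw [hπ, Set.projIcc_val]
    · intro z
      apply Subtype.ext
      apply ContinuousMap.ext
      intro s
      show F ((z, 0), s) = (h z).1 s
      have hc : (1 + ((0 : I) : ℝ)) * (s : ℝ) ≤ 1 := by
        simpa using s.2.2
      simp only [hFdef, if_pos hc]
      congr 1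
      rw [show (1 + ((0 : I) : ℝ)) * (s : ℝ) = (s : ℝ) by norm_num, hπ, Set.projIcc_val]
end

section
/- Every stratified map f : X → Y between stratified spaces factors as f = p ∘ s, where s : X → P_f is a stratified weak equivalence (has a stratified homotopy inverse) and p : P_f → Y is a stratified fibration (has the stratified homotopy lifting property). Here P_f = {(ω, x) : ω a path in Y contained in one stratum, ω(1) = f(x)}, s(x) = (constant path at f(x), x), and p(ω, x) = ω(0). -/
open unitInterval

/-- The mapping path space `P_f` of a stratified map `f : X → Y`. -/
abbrev MappingPathSpace {X Y : Type} [TopologicalSpace X] [TopologicalSpace Y]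
    (rY : Y → Y → Prop) (f : X → Y) : Type :=
  {z : SPath Y rY × X // z.1.1 1 = f z.2}

/-- Clamp a real number into the unit interval. -/
noncomputable def pI (r : ℝ) : I := Set.projIcc 0 1 zero_le_one r

lemma pI_cont : Continuous pI := by unfold pI; exact continuous_projIcc

@[simp] lemma pI_coe (t : I) : pI (t : ℝ) = t := Set.projIcc_val zero_le_one t

@[simp] lemma pI_zero : pI 0 = 0 := by
  simpa [pI] using Set.projIcc_left (0 : ℝ) (1 : ℝ) zero_le_one

@[simp] lemma pI_one : pI 1 = 1 := by
  simpa [pI] using Set.projIcc_right (0 : ℝ) (1 : ℝ) zero_le_one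

@[simp] lemma I_coe_zero : (((0 : I)) : ℝ) = 0 := rfl
@[simp] lemma I_coe_one : (((1 : I)) : ℝ) = 1 := rfl

/-- every stratified map factors as a stratified weak equivalence followed by
a stratified fibration, through the mapping path space. -/
theorem stratMap_factors_weakEquiv_fibration {X Y : Type}
    [TopologicalSpace X] [TopologicalSpace Y]
    (rX : X → X → Prop) (rY : Y → Y → Prop)
    (hX : Equivalence rX) (hY : Equivalence rY)
    (hpcX : ∀ x : X, IsPathConnected {x' | rX x x'})
    (hpcY : ∀ y : Y, IsPathConnected {y' | rY y y'})
    (f : X → Y) (hf : IsStratMap rX rY f)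
    (rP : MappingPathSpace rY f → MappingPathSpace rY f → Prop)
    (hrP : ∀ z w : MappingPathSpace rY f,
      rP z w ↔ SPathRel rY z.1.1 w.1.1 ∧ rX z.1.2 w.1.2) :
    IsStratFibration rP rY (fun z : MappingPathSpace rY f => z.1.1.1 0) ∧
    IsStratWeakEquiv rX rP
      (fun x : X =>
        (⟨(⟨ContinuousMap.const I (f x), fun _ _ => hY.refl _⟩, x), rfl⟩ :
          MappingPathSpace rY f)) ∧
    (∀ x : X,
      ((⟨(⟨ContinuousMap.const I (f x), fun _ _ => hY.refl _⟩, x), rfl⟩ :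
          MappingPathSpace rY f)).1.1.1 0 = f x) := by
  classical
  obtain ⟨hfc, hfr⟩ := hf
  refine ⟨⟨⟨?_, ?_⟩, ?_⟩, ⟨⟨?_, ?_⟩, ?_⟩, fun x => rfl⟩
  · -- continuity of p
    exact (continuous_eval_const (0 : I)).comp
      (continuous_subtype_val.comp (continuous_fst.comp continuous_subtype_val))
  · -- p is relation-preserving
    intro z w hzw
    exact ((hrP z w).1 hzw).1
  · -- SHLP
    intro Z _ rZ hZeq hpcZ h hh H hH hH0
    set ω : Z → C(I, Y) := fun z => (h z).1.1.1 with hωdef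
    have hωc : Continuous ω :=
      continuous_subtype_val.comp (continuous_fst.comp (continuous_subtype_val.comp hh.1))
    have hωs : ∀ z (u u' : I), rY (ω z u) (ω z u') := fun z => (h z).1.1.2
    have hω1 : ∀ z, ω z 1 = f (h z).1.2 := fun z => (h z).2
    have hH0' : ∀ z, H (z, 0) = ω z 0 := hH0
    set η : Z → I → I → Y := fun z t u =>
      if (1 + (t : ℝ)) * u ≤ t
      then H (z, pI ((t : ℝ) - (1 + t) * u))
      else ω z (pI ((1 + (t : ℝ)) * u - t)) with hηdef
    have keyCont : Continuous fun q : (Z × I) × I => η q.1.1 q.1.2 q.2 := by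
      rw [hηdef]
      apply Continuous.if_le
      · exact hH.1.comp ((continuous_fst.comp continuous_fst).prodMk
          (pI_cont.comp (by fun_prop)))
      · exact continuous_eval.comp ((hωc.comp (continuous_fst.comp continuous_fst)).prodMk
          (pI_cont.comp (by fun_prop)))
      · fun_prop
      · fun_prop
      · rintro ⟨⟨z, t⟩, u⟩ he
        have h1 : (t : ℝ) - (1 + t) * u = 0 := by dsimp only at he ⊢; linarith
        have h2 : (1 + (t : ℝ)) * u - t = 0 := by dsimp only at he ⊢; linarith
        dsimp only
        rw [h1, h2, pI_zero, hH0' z]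
    have ηcont : ∀ z t, Continuous (η z t) := fun z t => by
      exact keyCont.comp
        (continuous_const.prodMk continuous_id : Continuous fun u : I => ((z, t), u))
    have ηbase : ∀ z t u, rY (η z t u) (ω z 0) := by
      intro z t u
      rw [hηdef]
      dsimp only
      by_cases hc : (1 + (t : ℝ)) * u ≤ t
      · rw [if_pos hc, ← hH0' z]
        exact hH.2 z z _ 0 (hZeq.refl z)
      · rw [if_neg hc]
        exact hωs z _ 0
    have ηstrat : ∀ z t u u', rY (η z t u) (η z t u') := fun z t u u' =>
      hY.trans (ηbase z t u) (hY.symm (ηbase z t u'))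
    have η1 : ∀ z t, η z t 1 = f (h z).1.2 := by
      intro z t
      rw [hηdef]
      dsimp only
      rw [if_neg (by rw [I_coe_one, mul_one]; linarith)]
      have harg : (1 + (t : ℝ)) * ((1 : I) : ℝ) - t = 1 := by rw [I_coe_one]; ring
      rw [harg, pI_one, hω1]
    have η0 : ∀ z t, η z t 0 = H (z, t) := by
      intro z t
      rw [hηdef]
      dsimp only
      rw [if_pos (by rw [I_coe_zero, mul_zero]; exact t.2.1)]
      have harg : (t : ℝ) - (1 + t) * ((0 : I) : ℝ) = t := by rw [I_coe_zero]; ring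
      rw [harg, pI_coe]
    have ηt0 : ∀ z u, η z 0 u = ω z u := by
      intro z u
      rw [hηdef]
      dsimp only
      by_cases hc : (1 + ((0 : I) : ℝ)) * u ≤ ((0 : I) : ℝ)
      · rw [if_pos hc]
        have hu : (u : ℝ) = 0 := by
          rw [I_coe_zero] at hc
          have := u.2.1; linarith
        have hu' : u = 0 := Subtype.ext hu
        have harg : ((0 : I) : ℝ) - (1 + ((0 : I) : ℝ)) * (u : ℝ) = 0 := by
          rw [I_coe_zero, hu]; ring
        rw [harg, pI_zero, hH0' z, hu']
      · rw [if_neg hc]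
        have harg : (1 + ((0 : I) : ℝ)) * (u : ℝ) - ((0 : I) : ℝ) = u := by
          rw [I_coe_zero]; ring
        rw [harg, pI_coe]
    refine ⟨fun q => ⟨(⟨⟨η q.1 q.2, ηcont q.1 q.2⟩, ηstrat q.1 q.2⟩, (h q.1).1.2),
      η1 q.1 q.2⟩, ⟨?_, ?_⟩, ?_, ?_⟩
    · -- continuity of the lift
      apply Continuous.subtype_mk
      apply Continuous.prodMk
      · apply Continuous.subtype_mk
        exact ContinuousMap.continuous_of_continuous_uncurry _ keyCont
      · exact continuous_snd.comp (continuous_subtype_val.comp (hh.1.comp continuous_fst))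
    · -- the lift is a stratified homotopy
      intro z z' t t' hzz'
      refine (hrP _ _).2 ⟨?_, ((hrP _ _).1 (hh.2 z z' hzz')).2⟩
      show rY (η z t 0) (η z' t' 0)
      rw [η0, η0]
      exact hH.2 z z' t t' hzz'
    · -- the lift lifts H
      intro z t
      exact η0 z t
    · -- the lift starts at h
      intro z
      refine Subtype.ext (Prod.ext ?_ rfl)
      refine Subtype.ext (ContinuousMap.ext fun u => ?_)
      exact ηt0 z u
  · -- s is continuous
    apply Continuous.subtype_mk
    apply Continuous.prodMk
    · exact Continuous.subtype_mk (ContinuousMap.continuous_const'.comp hfc) _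
    · exact continuous_id
  · -- s is relation-preserving
    intro x x' hxx'
    exact (hrP _ _).2 ⟨hfr x x' hxx', hxx'⟩
  · -- homotopy inverse g
    refine ⟨fun z => z.1.2, ⟨?_, fun z w hzw => ((hrP z w).1 hzw).2⟩, ?_, ?_⟩
    · exact continuous_snd.comp continuous_subtype_val
    · -- s ∘ g ≃ id
      set θ : MappingPathSpace rY f → I → I → Y := fun z t u =>
        z.1.1.1 (pI (1 - (t : ℝ) * (1 - u))) with hθdef
      have keyC : Continuous fun q : (MappingPathSpace rY f × I) × I =>
          θ q.1.1 q.1.2 q.2 := by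
        rw [hθdef]
        exact continuous_eval.comp
          ((continuous_subtype_val.comp (continuous_fst.comp (continuous_subtype_val.comp
            (continuous_fst.comp continuous_fst)))).prodMk (pI_cont.comp (by fun_prop)))
      have θcont : ∀ z t, Continuous (θ z t) := fun z t => by
        exact keyC.comp
          (continuous_const.prodMk continuous_id : Continuous fun u : I => ((z, t), u))
      have θstrat : ∀ z t u u', rY (θ z t u) (θ z t u') := fun z t u u' =>
        z.1.1.2 _ _
      have θ1 : ∀ z t, θ z t 1 = f z.1.2 := by
        intro z t
        rw [hθdef]
        dsimp only
        have harg : 1 - (t : ℝ) * (1 - ((1 : I) : ℝ)) = 1 := by rw [I_coe_one]; ring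
        rw [harg, pI_one]
        exact z.2
      refine ⟨fun q => ⟨(⟨⟨θ q.1 q.2, θcont q.1 q.2⟩, θstrat q.1 q.2⟩, q.1.1.2),
        θ1 q.1 q.2⟩, ⟨?_, ?_⟩, ?_, ?_⟩
      · apply Continuous.subtype_mk
        apply Continuous.prodMk
        · apply Continuous.subtype_mk
          exact ContinuousMap.continuous_of_continuous_uncurry _ keyC
        · exact continuous_snd.comp (continuous_subtype_val.comp continuous_fst)
      · intro z z' t t' hzz'
        obtain ⟨h1, h2⟩ := (hrP _ _).1 hzz'
        refine (hrP _ _).2 ⟨?_, h2⟩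
        show rY (θ z t 0) (θ z' t' 0)
        exact hY.trans (z.1.1.2 _ 0) (hY.trans h1 (z'.1.1.2 0 _))
      · -- at time 0 : s ∘ g
        intro z
        refine Subtype.ext (Prod.ext ?_ rfl)
        refine Subtype.ext (ContinuousMap.ext fun u => ?_)
        show θ z 0 u = f z.1.2
        rw [hθdef]
        dsimp only
        have harg : 1 - ((0 : I) : ℝ) * (1 - (u : ℝ)) = 1 := by rw [I_coe_zero]; ring
        rw [harg, pI_one]
        exact z.2
      · -- at time 1 : id
        intro z
        refine Subtype.ext (Prod.ext ?_ rfl)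
        refine Subtype.ext (ContinuousMap.ext fun u => ?_)
        show θ z 1 u = z.1.1.1 u
        rw [hθdef]
        dsimp only
        have harg : 1 - ((1 : I) : ℝ) * (1 - (u : ℝ)) = u := by rw [I_coe_one]; ring
        rw [harg, pI_coe]
    · -- g ∘ s ≃ id
      exact ⟨fun q => q.1, ⟨continuous_fst, fun x x' t t' hxx' => hxx'⟩,
        fun x => rfl, fun x => rfl⟩
end

section
/- Let (X, A, F_X) be a stratified pair and f : X → Y a stratified map admitting a right stratified-homotopy inverse g : Y → X (i.e., f ∘ g ≃_S id_Y). Then Ocat(Y, f(A), F_Y) ≤ Ocat(X, A, F_X). -/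
open unitInterval

/-- if `f` has a right stratified homotopy inverse `g`, then
`Ocat(Y, f(A), F_Y) ≤ Ocat(X, A, F_X)`. -/
theorem ocat_image_le {X Y : Type} [TopologicalSpace X] [TopologicalSpace Y]
    (rX : X → X → Prop) (rY : Y → Y → Prop)
    (hX : Equivalence rX) (hY : Equivalence rY)
    (A : Set X) (f : X → Y) (g : Y → X)
    (hf : IsStratMap rX rY f) (hg : IsStratMap rY rX g)
    (hfg : SHomotopic rY rY (f ∘ g) id) :
    Ocat rY (f '' A) ≤ Ocat rX A := by
  obtain ⟨K, ⟨Kc, Ks⟩, K0, K1⟩ := hfg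
  apply sInf_le_sInf
  rintro c ⟨n, rfl, U, hUo, hUc, hUcat⟩
  refine ⟨n, rfl, fun i => g ⁻¹' (U i), fun i => (hUo i).preimage hg.1,
    fun y => hUc (g y), ?_⟩
  intro i
  obtain ⟨H, ⟨Hc, Hs⟩, H0, H1⟩ := hUcat i
  set V : Set Y := g ⁻¹' (U i) with hV
  let ι : V → U i := fun y => ⟨g y.1, y.2⟩
  have ιc : Continuous ι := Continuous.subtype_mk (hg.1.comp continuous_subtype_val) _
  let F₀ : C(V, Y) := ⟨fun y => (y : Y), continuous_subtype_val⟩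
  let F₁ : C(V, Y) := ⟨fun y => f (g y), (hf.1.comp hg.1).comp continuous_subtype_val⟩
  let F₂ : C(V, Y) := ⟨fun y => f (H (ι y, 1)),
    hf.1.comp (Hc.comp (ιc.prodMk continuous_const))⟩
  let h₁ : ContinuousMap.Homotopy F₀ F₁ :=
    { toFun := fun p => K (p.2, unitInterval.symm p.1)
      continuous_toFun := Kc.comp ((continuous_subtype_val.comp continuous_snd).prodMk
        (unitInterval.continuous_symm.comp continuous_fst))
      map_zero_left := by intro y; simp only [unitInterval.symm_zero]; exact K1 y
      map_one_left := by intro y; simp only [unitInterval.symm_one]; rw [K0]; rfl }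
  let h₂ : ContinuousMap.Homotopy F₁ F₂ :=
    { toFun := fun p => f (H (ι p.2, p.1))
      continuous_toFun := hf.1.comp (Hc.comp ((ιc.comp continuous_snd).prodMk
        continuous_fst))
      map_zero_left := by intro y; simp only [H0]; rfl
      map_one_left := fun y => rfl }
  let G := h₁.trans h₂
  have key : ∀ (y : V) (t : I), rY (G (t, y)) (y : Y) := by
    intro y t
    have hrefl : rY (y : Y) y := hY.refl _
    have hK : ∀ s, rY (K ((y : Y), s)) (y : Y) := by
      intro s
      have := Ks (y : Y) (y : Y) s 1 hrefl
      rwa [K1] at this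
    have hιrefl : relInduced rX (U i) (ι y) (ι y) :=
      mem_connectedComponentIn ⟨y.2, hX.refl _⟩
    have hH : ∀ s, rY (f (H (ι y, s))) (y : Y) := by
      intro s
      have h1 : rX (H (ι y, s)) (H (ι y, 0)) := Hs _ _ s 0 hιrefl
      have h2 : rY (f (H (ι y, s))) (f (g (y : Y))) := by
        have := hf.2 _ _ h1
        rwa [H0] at this
      have h3 : rY (f (g (y : Y))) (y : Y) := by
        have := hK 0
        rwa [K0] at this
      exact hY.trans h2 h3
    rw [ContinuousMap.Homotopy.trans_apply]
    split_ifs with h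
    · exact hK _
    · exact hH _
  refine ⟨fun p => G (p.2, p.1), ⟨G.continuous.comp
    (continuous_snd.prodMk continuous_fst), ?_⟩, ?_, ?_⟩
  · intro y y' t t' hr
    have hyy' : rY (y : Y) (y' : Y) := (connectedComponentIn_subset _ _ hr).2
    exact hY.trans (hY.trans (key y t) hyy') (hY.symm (key y' t'))
  · intro y
    exact G.apply_zero y
  · intro y
    show G (1, y) ∈ f '' A
    rw [G.apply_one y]
    exact ⟨H (ι y, 1), H1 (ι y), rfl⟩
end

section
/- Let X = ℝ² with the stratification F whose strata are the orbits of the rotation group SO(2) (the origin and the circles centered at the origin), and let A = {(x, 0) : x ≥ 0} be the nonnegative x-axis. Then Ocat(ℝ², A, F) = ∞: there is no finite cover of ℝ² by A-categorical open sets. -/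
open unitInterval

open Complex Real in
private lemma no_contraction
 (K : ℝ × I → ℂ) (hK : Continuous K)
    (hnorm : ∀ z t, ‖K (z, t)‖ = 1)
    (hper : ∀ z t, K (z + 2 * π, t) = K (z, t))
    (h0 : ∀ z, K (z, 0) = Complex.exp (z * Complex.I))
    (h1 : ∀ z, K (z, 1) = 1) : False := by
  have hKne : ∀ z t, K (z, t) ≠ 0 := by
    intro z t h
    have := hnorm z t; rw [h] at this; simp at this
  -- uniform continuity on compact set
  obtain ⟨δ, hδ, hδ2⟩ : ∃ δ > 0, ∀ z ∈ Set.Icc (0:ℝ) (2*π), ∀ t s : I,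
      dist t s < δ → ‖K (z, t) - K (z, s)‖ < 2 := by
    have hcomp : IsCompact ((Set.Icc (0:ℝ) (2*π)) ×ˢ (Set.univ : Set I)) :=
      (isCompact_Icc).prod isCompact_univ
    have huc := hcomp.uniformContinuousOn_of_continuous hK.continuousOn
    rw [Metric.uniformContinuousOn_iff] at huc
    obtain ⟨δ, hδ, h⟩ := huc 2 (by norm_num)
    refine ⟨δ, hδ, fun z hz t s hts => ?_⟩
    have := h (z, t) ⟨hz, trivial⟩ (z, s) ⟨hz, trivial⟩ ?_
    · simpa [dist_eq_norm] using this
    · simpa [Prod.dist_eq, hδ] using hts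
  obtain ⟨n, hn⟩ : ∃ n : ℕ, 1 / ((n:ℝ) + 1) < δ := exists_nat_one_div_lt hδ
  set N : ℕ := n + 1 with hN
  have hNpos : (0:ℝ) < N := by positivity
  -- time subdivision
  have tmem : ∀ (j : ℕ) (t : I), min (t:ℝ) (j / N) ∈ I := by
    intro j t
    constructor
    · exact le_min t.2.1 (by positivity)
    · exact min_le_of_left_le t.2.2
  set τ : ℕ → I → I := fun j t => ⟨min (t:ℝ) (j / N), tmem j t⟩ with hτ
  have τ0 : ∀ t, τ 0 t = 0 := by
    intro t; apply Subtype.ext; simp [τ, min_eq_right t.2.1]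
  have τN : ∀ t, τ N t = t := by
    intro t; apply Subtype.ext
    simp [τ, div_self (ne_of_gt hNpos), min_eq_left t.2.2]
  have τz : ∀ j, τ j 0 = 0 := by
    intro j; apply Subtype.ext; simp [τ]; positivity
  have τdist : ∀ (j : ℕ) (t : I), dist (τ (j+1) t) (τ j t) < δ := by
    intro j t
    rw [Subtype.dist_eq, Real.dist_eq]
    have h1' : min (t:ℝ) (j / N) ≤ min (t:ℝ) ((j+1) / N) := by
      apply min_le_min le_rfl; gcongr; norm_num
    have h2' : min (t:ℝ) (((j:ℝ)+1) / N) ≤ min (t:ℝ) (j / N) + 1 / N := by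
      rcases min_cases (t:ℝ) ((j:ℝ) / N) with ⟨h, _⟩ | ⟨h, _⟩
      · rw [h]; exact le_add_of_le_of_nonneg (min_le_left _ _) (by positivity)
      · rw [h]
        refine le_trans (min_le_right _ _) ?_
        rw [add_div]
    have hle : |min (t:ℝ) (((j:ℕ)+1:ℕ) / N) - min (t:ℝ) (j / N)| ≤ 1 / N := by
      rw [abs_le]
      push_cast at h1' h2' ⊢
      constructor <;> linarith
    refine lt_of_le_of_lt hle ?_
    rw [hN]; push_cast; exact hn
  -- the ratios
  set Q : ℕ → ℝ × I → ℂ := fun j p => K (p.1, τ (j+1) p.2) / K (p.1, τ j p.2) with hQ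
  have hQabs : ∀ j p, ‖Q j p‖ = 1 := by
    intro j p; simp [Q, norm_div, hnorm]
  have hQslit : ∀ j, ∀ z ∈ Set.Icc (0:ℝ) (2*π), ∀ t : I, Q j (z, t) ∈ slitPlane := by
    intro j z hz t
    by_contra hcon
    rw [mem_slitPlane_iff] at hcon
    push_neg at hcon
    obtain ⟨hre, him⟩ := hcon
    have habs := hQabs j (z, t)
    have h2 : Q j (z,t) = ((Q j (z,t)).re : ℂ) := by
      apply Complex.ext <;> simp [him]
    rw [h2, Complex.norm_real, Real.norm_eq_abs] at habs
    have hreeq : (Q j (z,t)).re = -1 := by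
      rcases abs_eq (by norm_num : (0:ℝ) ≤ 1) |>.mp habs with h' | h'
      · linarith
      · exact h'
    have hQm1 : Q j (z,t) = -1 := by rw [h2, hreeq]; norm_num
    have heq : K (z, τ (j+1) t) = -K (z, τ j t) := by
      have := (div_eq_iff (hKne z (τ j t))).mp hQm1
      rw [this]; ring
    have hlt := hδ2 z hz (τ (j+1) t) (τ j t) (τdist j t)
    rw [heq] at hlt
    have : ‖-K (z, τ j t) - K (z, τ j t)‖ = 2 := by
      have : -K (z, τ j t) - K (z, τ j t) = (-2) * K (z, τ j t) := by ring
      rw [this, norm_mul, hnorm]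
      norm_num
    linarith
  -- the lift
  set L : ℝ × I → ℝ := fun p => p.1 + ∑ j ∈ Finset.range N, Complex.arg (Q j p) with hL
  -- lift property
  have hlift : ∀ (z : ℝ) (t : I), Complex.exp ((L (z, t) : ℂ) * Complex.I) = K (z, t) := by
    intro z t
    have key : ∀ m : ℕ, Complex.exp ((↑(z + ∑ j ∈ Finset.range m, Complex.arg (Q j (z,t))) : ℂ)
        * Complex.I) = K (z, τ m t) := by
      intro m
      induction m with
      | zero => simp [τ0, h0]
      | succ m ih =>
        have harg : Complex.exp ((Complex.arg (Q m (z,t)) : ℂ) * Complex.I) = Q m (z,t) := by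
          have := Complex.norm_mul_exp_arg_mul_I (Q m (z,t))
          rwa [hQabs, Complex.ofReal_one, one_mul] at this
        have hsplit : ((z + ∑ j ∈ Finset.range (m+1), Complex.arg (Q j (z,t)) : ℝ) : ℂ)
            * Complex.I = (↑(z + ∑ j ∈ Finset.range m, Complex.arg (Q j (z,t))) : ℂ) * Complex.I
              + (Complex.arg (Q m (z,t)) : ℂ) * Complex.I := by
          rw [Finset.sum_range_succ]; push_cast; ring
        rw [hsplit, Complex.exp_add, ih, harg]
        show K (z, τ m t) * (K (z, τ (m+1) t) / K (z, τ m t)) = _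
        rw [mul_div_cancel₀ _ (hKne z (τ m t))]
    have := key N
    rw [τN] at this
    exact this
  -- L at time 0
  have hL0 : ∀ z : ℝ, L (z, 0) = z := by
    intro z
    have : ∀ j ∈ Finset.range N, Complex.arg (Q j (z, (0:I))) = 0 := by
      intro j _
      show Complex.arg (K (z, τ (j+1) (0:I)) / K (z, τ j (0:I))) = 0
      rw [τz, τz, div_self (hKne z 0), Complex.arg_one]
    show z + _ = z
    rw [Finset.sum_eq_zero this, add_zero]
  -- L is a multiple of 2π at time 1
  have hL1 : ∀ z : ℝ, ∃ m : ℤ, L (z, 1) = m * (2 * π) := by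
    intro z
    have := hlift z 1
    rw [h1, Complex.exp_eq_one_iff] at this
    obtain ⟨m, hm⟩ := this
    refine ⟨m, ?_⟩
    have : (L (z,1) : ℂ) = (m : ℂ) * (2 * π) := by
      apply mul_right_cancel₀ Complex.I_ne_zero
      rw [hm]; ring
    exact_mod_cast this
  -- periodicity of L
  have hLper : ∀ t : I, L (2 * π, t) = L (0, t) + 2 * π := by
    intro t
    have hQper : ∀ j, Q j (2 * π, t) = Q j (0, t) := by
      intro j
      show K (2*π, τ (j+1) t) / K (2*π, τ j t) = K (0, τ (j+1) t) / K (0, τ j t)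
      have h1' := hper 0 (τ (j+1) t)
      have h2' := hper 0 (τ j t)
      rw [zero_add] at h1' h2'
      rw [h1', h2']
    show 2 * π + _ = 0 + _ + 2 * π
    rw [Finset.sum_congr rfl (fun j _ => by rw [hQper j] :
      ∀ j ∈ Finset.range N, (Q j (2*π, t)).arg = (Q j (0, t)).arg)]
    ring
  -- continuity of z ↦ L (z, 1) on [0, 2π]
  have hcont : ContinuousOn (fun z => L (z, 1)) (Set.Icc 0 (2*π)) := by
    apply ContinuousOn.add continuousOn_id
    apply continuousOn_finset_sum
    intro j _
    intro z hz
    have hQcont : ContinuousAt (fun z : ℝ => Q j (z, 1)) z := by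
      have c1 : Continuous (fun z : ℝ => K (z, τ (j+1) 1)) :=
        hK.comp (continuous_id.prodMk continuous_const)
      have c2 : Continuous (fun z : ℝ => K (z, τ j 1)) :=
        hK.comp (continuous_id.prodMk continuous_const)
      exact ((c1.div c2 (fun x => hKne x _)).continuousAt)
    exact (ContinuousAt.comp (x := z) (g := Complex.arg)
      (Complex.continuousAt_arg (hQslit j z hz 1)) hQcont).continuousWithinAt
  -- IVT finish
  obtain ⟨a, ha⟩ := hL1 0
  have h2π : L (2*π, 1) = a * (2*π) + 2*π := by rw [hLper, ha]
  have hπ : (0:ℝ) < π := Real.pi_pos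
  have hmem : a * (2*π) + π ∈ Set.Icc (L (0,1)) (L (2*π,1)) := by
    rw [ha, h2π]; constructor <;> nlinarith
  obtain ⟨z, hz, hzeq⟩ := intermediate_value_Icc (by nlinarith : (0:ℝ) ≤ 2*π) hcont hmem
  obtain ⟨b, hb⟩ := hL1 z
  rw [show L (z,1) = ↑a * (2*π) + π from hzeq] at hb
  have : (2*b : ℝ) = 2*a + 1 := by
    have h2 : π * (2*b) = π * (2*a+1) := by nlinarith
    exact mul_left_cancel₀ (ne_of_gt hπ) h2
  have : (2*b : ℤ) = 2*a + 1 := by exact_mod_cast this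
  omega

/-- the plane stratified by the orbits of `SO(2)` (circles centered at the
origin), with `A` the nonnegative `x`-axis, has infinite open LS-category. -/
theorem ocat_plane_rotation_orbits_eq_top :
    Ocat (fun p q : ℝ × ℝ => p.1 ^ 2 + p.2 ^ 2 = q.1 ^ 2 + q.2 ^ 2)
      {p : ℝ × ℝ | 0 ≤ p.1 ∧ p.2 = 0} = ⊤ := by
  have key : ∀ n : ℕ, ¬ OcatLe (fun p q : ℝ × ℝ => p.1 ^ 2 + p.2 ^ 2 = q.1 ^ 2 + q.2 ^ 2)
      {p : ℝ × ℝ | 0 ≤ p.1 ∧ p.2 = 0} n := by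
    intro n hocat
    obtain ⟨U, hopen, hcover, hcat⟩ := hocat
    obtain ⟨i, hi⟩ := hcover (0, 0)
    obtain ⟨ε, hε, hball⟩ := Metric.isOpen_iff.mp (hopen i) _ hi
    set r := ε / 2 with hr
    have hrpos : 0 < r := by positivity
    set f : ℝ → ℝ × ℝ := fun θ => (r * Real.cos θ, r * Real.sin θ) with hf
    have hfcont : Continuous f := by
      apply Continuous.prodMk
      · exact continuous_const.mul Real.continuous_cos
      · exact continuous_const.mul Real.continuous_sin
    have hfmem : ∀ θ, f θ ∈ U i := by
      intro θ
      apply hball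
      rw [Metric.mem_ball, Prod.dist_eq]
      have c1 : dist (r * Real.cos θ) (0:ℝ) < ε := by
        rw [Real.dist_eq, sub_zero, abs_mul, abs_of_pos hrpos]
        calc r * |Real.cos θ| ≤ r * 1 := by
              exact mul_le_mul_of_nonneg_left (Real.abs_cos_le_one θ) hrpos.le
          _ < ε := by rw [hr]; linarith
      have c2 : dist (r * Real.sin θ) (0:ℝ) < ε := by
        rw [Real.dist_eq, sub_zero, abs_mul, abs_of_pos hrpos]
        calc r * |Real.sin θ| ≤ r * 1 := by
              exact mul_le_mul_of_nonneg_left (Real.abs_sin_le_one θ) hrpos.le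
          _ < ε := by rw [hr]; linarith
      exact max_lt c1 c2
    obtain ⟨H, ⟨hHcont, hHrel⟩, hH0, hH1⟩ := hcat i
    set g : ℝ → U i := fun θ => ⟨f θ, hfmem θ⟩ with hg
    have hgcont : Continuous g := hfcont.subtype_mk _
    have hnorm2 : ∀ θ, (f θ).1 ^ 2 + (f θ).2 ^ 2 = r ^ 2 := by
      intro θ
      have := Real.sin_sq_add_cos_sq θ
      simp only [hf]
      nlinarith [this]
    have hrefl : ∀ x : U i, relInduced
        (fun p q : ℝ × ℝ => p.1 ^ 2 + p.2 ^ 2 = q.1 ^ 2 + q.2 ^ 2) (U i) x x := by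
      intro x
      exact mem_connectedComponentIn ⟨x.2, rfl⟩
    have hstay : ∀ (x : U i) (t : I),
        (H (x, t)).1 ^ 2 + (H (x, t)).2 ^ 2 = (x : ℝ × ℝ).1 ^ 2 + (x : ℝ × ℝ).2 ^ 2 := by
      intro x t
      have h := hHrel x x t 0 (hrefl x)
      rw [hH0] at h
      exact h
    have hend : ∀ θ, H (g θ, 1) = (r, 0) := by
      intro θ
      have hA := hH1 (g θ)
      have hs := hstay (g θ) 1
      have hn2 : ((g θ : ℝ × ℝ)).1 ^ 2 + ((g θ : ℝ × ℝ)).2 ^ 2 = r ^ 2 := hnorm2 θ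
      rw [hn2] at hs
      obtain ⟨hA1, hA2⟩ := hA
      rw [hA2] at hs
      have h1 : (H (g θ, 1)).1 = r := by nlinarith
      exact Prod.ext h1 hA2
    set K : ℝ × I → ℂ := fun p =>
      (((H (g p.1, p.2)).1 : ℂ) + ((H (g p.1, p.2)).2 : ℂ) * Complex.I) / (r : ℂ) with hKdef
    have hrC : (r : ℂ) ≠ 0 := by
      exact_mod_cast hrpos.ne'
    apply no_contraction K
    · have hHg : Continuous (fun p : ℝ × I => H (g p.1, p.2)) :=
        hHcont.comp ((hgcont.comp continuous_fst).prodMk continuous_snd)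
      apply Continuous.div_const
      apply Continuous.add
      · exact Complex.continuous_ofReal.comp (continuous_fst.comp hHg)
      · exact (Complex.continuous_ofReal.comp (continuous_snd.comp hHg)).mul continuous_const
    · intro z t
      simp only [hKdef]
      rw [norm_div, Complex.norm_real, Real.norm_eq_abs, abs_of_pos hrpos,
        Complex.norm_add_mul_I]
      have hs := hstay (g z) t
      rw [hnorm2 z] at hs
      rw [hs, Real.sqrt_sq hrpos.le, div_self hrpos.ne']
    · intro z t
      have : g (z + 2 * Real.pi) = g z := by
        apply Subtype.ext
        simp only [hg, hf]
        rw [Real.cos_add_two_pi, Real.sin_add_two_pi]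
      simp only [hKdef, this]
    · intro z
      have h0' : H (g z, 0) = f z := hH0 (g z)
      simp only [hKdef, h0', hf]
      rw [Complex.exp_mul_I, ← Complex.ofReal_cos, ← Complex.ofReal_sin]
      push_cast
      field_simp
    · intro z
      simp only [hKdef, hend z]
      push_cast
      field_simp
      simp
  have hempty : {c : ℕ∞ | ∃ n : ℕ, c = (n : ℕ∞) ∧
      OcatLe (fun p q : ℝ × ℝ => p.1 ^ 2 + p.2 ^ 2 = q.1 ^ 2 + q.2 ^ 2)
        {p : ℝ × ℝ | 0 ≤ p.1 ∧ p.2 = 0} n} = ∅ := by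
    rw [Set.eq_empty_iff_forall_notMem]
    rintro c ⟨n, -, hn⟩
    exact key n hn
  unfold Ocat
  rw [hempty, sInf_empty]
end

section
/- For any stratified pair (X, A, F_X) and any n, the n-th Ganea fibration g_n : G_n(X, A, F_X) → X, (α₁,...,α_{n+1}) ↦ α₁(1), admits a stratified section if and only if the diagonal Δ : X → X^{n+1} factors up to stratified homotopy through the inclusion of the n-th fat wedge T_n(X, A, F_X) ⊆ X^{n+1}. Consequently Whcat(X, A, F_X) = Gcat(X, A, F_X). -/
open unitInterval

/-- the `n`-th Ganea fibration admits a stratified section iff the diagonal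
factors up to stratified homotopy through the `n`-th fat wedge; hence
`Whcat(X,A,F_X) = Gcat(X,A,F_X)`. -/
theorem gcat_eq_whcat {X : Type} [TopologicalSpace X]
    (rX : X → X → Prop) (hX : Equivalence rX)
    (hpc : ∀ x : X, IsPathConnected {x' | rX x x'}) (A : Set X) :
    (∀ n : ℕ, GcatLe rX A n ↔ WhcatLe rX A n) ∧ Gcat rX A = Whcat rX A := by
  have key : ∀ n : ℕ, GcatLe rX A n ↔ WhcatLe rX A n := by
    intro n
    constructor
    · rintro ⟨s, ⟨scont, sstrat⟩, ssec⟩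
      -- r x = starting points of the paths
      have hval : Continuous fun x => (s x).1 :=
        continuous_subtype_val.comp scont
      refine ⟨fun x i => ((s x).1 i).1 0, ⟨?_, ?_⟩, ?_, ?_⟩
      · exact continuous_pi fun i =>
          (continuous_eval_const 0).comp
            (continuous_subtype_val.comp ((continuous_apply i).comp hval))
      · intro x x' hxx' i
        exact sstrat x x' hxx' i
      · intro x
        obtain ⟨k, hk⟩ := (s x).2.2
        exact ⟨k, hk⟩
      · -- homotopy via evaluating the paths at σ t
        refine ⟨fun p i => ((s p.1).1 i).1 (σ p.2), ⟨?_, ?_⟩, ?_, ?_⟩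
        · refine continuous_pi fun i => ?_
          have gcont : Continuous fun x => ((s x).1 i).1 :=
            continuous_subtype_val.comp ((continuous_apply i).comp hval)
          exact continuous_eval.comp
            ((gcont.comp continuous_fst).prodMk
              (unitInterval.continuous_symm.comp continuous_snd))
        · intro x x' t t' hxx' i
          have h1 : rX (((s x).1 i).1 (σ t)) (((s x).1 i).1 0) :=
            ((s x).1 i).2 (σ t) 0
          have h2 : rX (((s x).1 i).1 0) (((s x').1 i).1 0) := sstrat x x' hxx' i
          have h3 : rX (((s x').1 i).1 0) (((s x').1 i).1 (σ t')) :=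
            ((s x').1 i).2 0 (σ t')
          exact hX.trans (hX.trans h1 h2) h3
        · intro x
          funext i
          have h1 : ((s x).1 i).1 1 = ((s x).1 0).1 1 := (s x).2.1 i
          have h2 : ((s x).1 0).1 1 = x := ssec x
          simp [unitInterval.symm_zero, h1, h2]
        · intro x
          simp [unitInterval.symm_one]
    · rintro ⟨r, ⟨rcont, rstrat⟩, rwedge, H, ⟨Hcont, Hstrat⟩, H0, H1⟩
      -- path family: for each i, the curried map t ↦ H (x, σ t) i
      have Fc : ∀ i : Fin (n + 1), Continuous fun p : X × I => H (p.1, σ p.2) i := by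
        intro i
        exact (continuous_apply i).comp
          (Hcont.comp (continuous_fst.prodMk
            (unitInterval.continuous_symm.comp continuous_snd)))
      let F : Fin (n + 1) → C(X × I, X) := fun i => ⟨fun p => H (p.1, σ p.2) i, Fc i⟩
      have hstrat_path : ∀ (x : X) (i : Fin (n+1)) (t t' : I),
          rX (H (x, t) i) (H (x, t') i) := fun x i t t' =>
        Hstrat x x t t' (hX.refl x) i
      let α : X → Fin (n + 1) → SPath X rX := fun x i =>
        ⟨(F i).curry x, fun t t' => hstrat_path x i (σ t) (σ t')⟩
      have hmem : ∀ x, α x ∈ GaneaSet rX A n := by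
        intro x
        constructor
        · intro i
          show H (x, σ 1) i = H (x, σ 1) 0
          rw [unitInterval.symm_one, H0]
        · obtain ⟨k, hk⟩ := rwedge x
          refine ⟨k, ?_⟩
          show H (x, σ 0) k ∈ A
          rw [unitInterval.symm_zero, H1]
          exact hk
      refine ⟨fun x => ⟨α x, hmem x⟩, ⟨?_, ?_⟩, ?_⟩
      · refine Continuous.subtype_mk ?_ _
        refine continuous_pi fun i => Continuous.subtype_mk ?_ _
        exact (F i).curry.continuous
      · intro x x' hxx' i
        exact Hstrat x x' (σ 0) (σ 0) hxx' i
      · intro x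
        show H (x, σ 1) 0 = x
        rw [unitInterval.symm_one, H0]
  refine ⟨key, ?_⟩
  have hset : {c : ℕ∞ | ∃ n : ℕ, c = (n : ℕ∞) ∧ GcatLe rX A n}
      = {c : ℕ∞ | ∃ n : ℕ, c = (n : ℕ∞) ∧ WhcatLe rX A n} := by
    ext c
    constructor
    · rintro ⟨n, rfl, h⟩
      exact ⟨n, rfl, (key n).mp h⟩
    · rintro ⟨n, rfl, h⟩
      exact ⟨n, rfl, (key n).mpr h⟩
  unfold Gcat Whcat
  rw [hset]
end

section
/- The square with top map g_n : G_n(X, A, F_X) → X, left map ε_n : G_n(X,A,F_X) → T_n(X,A,F_X), (α₁,...,α_{n+1}) ↦ (α₁(0),...,α_{n+1}(0)), right map the diagonal Δ : X → X^{n+1}, and bottom map the inclusion t_n : T_n(X,A,F_X) → X^{n+1}, commutes up to stratified homotopy and is a homotopy pullback in the fibration category of stratified spaces: G_n(X,A,F_X) is the strict pullback of t_n along the path-space fibration replacing Δ. -/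
open unitInterval

/-- Tuples of stratified paths with common endpoint: the fibrant replacement of the
diagonal `X → X^{n+1}` (evaluation at `0` is the associated fibration). -/
abbrev DiagPathSpace (X : Type) [TopologicalSpace X] (rX : X → X → Prop) (n : ℕ) : Type :=
  {α : Fin (n + 1) → SPath X rX // ∀ i, (α i).1 1 = (α 0).1 1}

/-- The strict pullback of the fat-wedge inclusion `t_n` along the evaluation-at-0
fibration `DiagPathSpace X rX n → X^{n+1}`. -/
abbrev GaneaPullback (X : Type) [TopologicalSpace X] (rX : X → X → Prop)
    (A : Set X) (n : ℕ) : Type :=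
  {z : DiagPathSpace X rX n × FatWedge A n //
    (fun i => ((z.1.1 i).1 0)) = (z.2 : Fin (n + 1) → X)}

/-- the Ganea/fat-wedge square commutes up to stratified homotopy and is a
homotopy pullback: `G_n(X,A,F_X)` is the strict pullback of `t_n` along the path-space
fibration replacing the diagonal. -/
theorem ganea_square_homotopy_pullback {X : Type} [TopologicalSpace X]
    (rX : X → X → Prop) (hX : Equivalence rX)
    (hpc : ∀ x : X, IsPathConnected {x' | rX x x'}) (A : Set X) (n : ℕ) :
    SHomotopic (relGanea rX A n) (relPi rX)
      (fun α : GaneaSet rX A n => fun _ => ganeaMap rX A n α)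
      (fun α : GaneaSet rX A n => fun i => (α.1 i).1 0) ∧
    ∃ e : GaneaSet rX A n ≃ₜ GaneaPullback X rX A n,
      (∀ α β : GaneaSet rX A n, relGanea rX A n α β ↔
        ((∀ i, rX (((e α).1.1.1 i).1 0) (((e β).1.1.1 i).1 0)) ∧
         (∀ i, rX (((e α).1.2 : Fin (n + 1) → X) i) (((e β).1.2 : Fin (n + 1) → X) i)))) ∧
      (∀ (α : GaneaSet rX A n) (i : Fin (n + 1)) (t : I),
        ((e α).1.1.1 i).1 t = (α.1 i).1 t) := by
  constructor
  · -- the homotopy: run each path backwards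
    refine ⟨fun p i => ((p.1.1 i).1 (σ p.2)), ⟨?_, ?_⟩, ?_, ?_⟩
    · apply continuous_pi
      intro i
      exact continuous_eval.comp
        ((((continuous_apply i).comp
          (continuous_subtype_val.comp continuous_fst)).subtype_val).prodMk
          (unitInterval.continuous_symm.comp continuous_snd))
    · intro α α' t t' h i
      exact hX.trans ((α.1 i).2 (σ t) 0) (hX.trans (h i) ((α'.1 i).2 0 (σ t')))
    · intro α
      funext i
      simp only [unitInterval.symm_zero]
      exact α.2.1 i
    · intro α
      funext i
      simp [unitInterval.symm_one]
  · refine ⟨{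
      toFun := fun α => ⟨(⟨α.1, α.2.1⟩, ⟨fun i => (α.1 i).1 0, α.2.2⟩), rfl⟩
      invFun := fun z => ⟨z.1.1.1, z.1.1.2, by
        obtain ⟨k, hk⟩ := z.1.2.2
        refine ⟨k, ?_⟩
        have := congrFun z.2 k
        simpa [this] using hk⟩
      left_inv := fun α => Subtype.ext rfl
      right_inv := fun z => Subtype.ext (Prod.ext (Subtype.ext rfl) (Subtype.ext z.2))
      continuous_toFun := by
        refine Continuous.subtype_mk (Continuous.prodMk ?_ ?_) _
        · exact (continuous_subtype_val).subtype_mk _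
        · refine Continuous.subtype_mk (continuous_pi fun i => ?_) _
          exact continuous_eval_const 0 |>.comp
            (((continuous_apply i).comp continuous_subtype_val).subtype_val)
      continuous_invFun := by
        exact (continuous_subtype_val.fst.subtype_val).subtype_mk _ }, ?_, ?_⟩
    · intro α β
      exact ⟨fun h => ⟨h, h⟩, fun h => h.1⟩
    · intro α i t
      rfl
end

section
/- Let (X, F_X) be a stratified space with X a normal topological space, and A ⊆ X. Then Whcat(X, A, F_X) ≤ Ocat(X, A, F_X): if X is covered by n+1 A-categorical open sets, then the diagonal X → X^{n+1} factors up to stratified homotopy through the n-th fat wedge T_n(X, A, F_X). -/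
open unitInterval

/-- for a normal space, `Whcat(X,A,F_X) ≤ Ocat(X,A,F_X)`: a cover by `n+1`
`A`-categorical open sets yields a factorization of the diagonal through the fat wedge. -/
theorem whcat_le_ocat {X : Type} [TopologicalSpace X] [NormalSpace X]
    (rX : X → X → Prop) (hX : Equivalence rX)
    (hpc : ∀ x : X, IsPathConnected {x' | rX x x'}) (A : Set X) :
    (∀ n : ℕ, OcatLe rX A n → WhcatLe rX A n) ∧ Whcat rX A ≤ Ocat rX A := by
  have main : ∀ n : ℕ, OcatLe rX A n → WhcatLe rX A n := by
    intro n hO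
    obtain ⟨U, hUo, hUc, hUA⟩ := hO
    choose H hH hH0 hH1 using hUA
    have hcov : ⋃ i, U i = Set.univ := Set.eq_univ_of_forall fun x => Set.mem_iUnion.2 (hUc x)
    obtain ⟨V, hVc, hVo, hVU⟩ :=
      exists_iUnion_eq_closure_subset hUo (fun x => Set.toFinite _) hcov
    obtain ⟨W, hWc, hWo, hWV⟩ :=
      exists_iUnion_eq_closure_subset hVo (fun x => Set.toFinite _) hVc
    choose φ hφ0 hφ1 hφm using fun i =>
      exists_continuous_zero_one_of_isClosed (isClosed_compl_iff.2 (hVo i)) isClosed_closure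
        (Set.disjoint_left.2 fun x hx hx2 => hx (hWV i hx2))
    have hσmem : ∀ i (x : X) (t : I), φ i x * (t : ℝ) ∈ Set.Icc (0:ℝ) 1 := fun i x t =>
      ⟨mul_nonneg (hφm i x).1 t.2.1, mul_le_one₀ (hφm i x).2 t.2.1 t.2.2⟩
    classical
    set G : Fin (n + 1) → X × I → X := fun i p =>
      if h : p.1 ∈ U i then H i (⟨p.1, h⟩, ⟨φ i p.1 * (p.2 : ℝ), hσmem i p.1 p.2⟩) else p.1
      with hGdef
    have hrefl : ∀ (i) (u : U i), relInduced rX (U i) u u := fun i u =>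
      mem_connectedComponentIn ⟨u.2, hX.refl _⟩
    -- G is the identity where φ vanishes
    have hGzero : ∀ i (p : X × I), p.1 ∉ V i → G i p = p.1 := by
      intro i p hp
      simp only [hGdef]
      split
      · rename_i h
        have hφ : φ i p.1 = 0 := hφ0 i hp
        have : (⟨φ i p.1 * (p.2 : ℝ), hσmem i p.1 p.2⟩ : I) = 0 := by
          apply Subtype.ext; simp [hφ]
        rw [this]
        exact hH0 i ⟨p.1, h⟩
      · rfl
    have hG0 : ∀ i (x : X), G i (x, 0) = x := by
      intro i x
      simp only [hGdef]
      split
      · rename_i h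
        have : (⟨φ i x * ((0 : I) : ℝ), hσmem i x 0⟩ : I) = 0 := by
          apply Subtype.ext; simp
        rw [this]
        exact hH0 i ⟨x, h⟩
      · rfl
    have hGrel : ∀ i (x : X) (t : I), rX (G i (x, t)) x := by
      intro i x t
      simp only [hGdef]
      split
      · rename_i h
        have h2 := (hH i).2 ⟨x, h⟩ ⟨x, h⟩ ⟨φ i x * (t : ℝ), hσmem i x t⟩ 0 (hrefl i ⟨x, h⟩)
        rwa [hH0 i ⟨x, h⟩] at h2
      · exact hX.refl x
    have hGA : ∀ i (x : X), x ∈ W i → G i (x, 1) ∈ A := by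
      intro i x hx
      have hxU : x ∈ U i := hVU i (subset_closure (hWV i (subset_closure hx)))
      have hφ : φ i x = 1 := hφ1 i (subset_closure hx)
      simp only [hGdef]
      rw [dif_pos hxU]
      have : (⟨φ i x * ((1 : I) : ℝ), hσmem i x 1⟩ : I) = 1 := by
        apply Subtype.ext; simp [hφ]
      rw [this]
      exact hH1 i ⟨x, hxU⟩
    have hGcont : ∀ i, Continuous (G i) := by
      intro i
      have hrest : ContinuousOn (G i) ((U i) ×ˢ (Set.univ : Set I)) := by
        rw [continuousOn_iff_continuous_restrict]
        have heq : ((U i) ×ˢ (Set.univ : Set I)).domRestrict (G i) =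
            fun q : ↥((U i) ×ˢ (Set.univ : Set I)) =>
              H i (⟨q.1.1, q.2.1⟩, ⟨φ i q.1.1 * (q.1.2 : ℝ), hσmem i q.1.1 q.1.2⟩) := by
          funext q; exact dif_pos q.2.1
        rw [heq]
        apply (hH i).1.comp
        apply Continuous.prodMk
        · exact Continuous.subtype_mk (continuous_fst.comp continuous_subtype_val) _
        · refine Continuous.subtype_mk ?_ _
          exact (((φ i).continuous.comp (continuous_fst.comp continuous_subtype_val))).mul
            (continuous_subtype_val.comp (continuous_snd.comp continuous_subtype_val))
      rw [continuous_iff_continuousAt]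
      intro p
      by_cases h : p.1 ∈ U i
      · exact hrest.continuousAt (((hUo i).prod isOpen_univ).mem_nhds ⟨h, trivial⟩)
      · have hnc : p.1 ∉ closure (V i) := fun hc => h (hVU i hc)
        have hmemn : (closure (V i))ᶜ ×ˢ (Set.univ : Set I) ∈ nhds p :=
          (isClosed_closure.isOpen_compl.prod isOpen_univ).mem_nhds ⟨hnc, trivial⟩
        refine continuousAt_fst.congr (Filter.eventuallyEq_of_mem hmemn fun q hq => ?_)
        exact (hGzero i q fun hv => hq.1 (subset_closure hv)).symm
    refine ⟨fun x i => G i (x, 1), ⟨?_, ?_⟩, ?_, ?_⟩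
    · exact continuous_pi fun i => (hGcont i).comp (continuous_id.prodMk continuous_const)
    · intro x x' hxx' i
      exact hX.trans (hGrel i x 1) (hX.trans hxx' (hX.symm (hGrel i x' 1)))
    · intro x
      obtain ⟨i, hi⟩ : ∃ i, x ∈ W i := Set.mem_iUnion.1 (hWc ▸ Set.mem_univ x)
      exact ⟨i, hGA i x hi⟩
    · refine ⟨fun p i => G i p, ⟨continuous_pi fun i => hGcont i, ?_⟩, ?_, ?_⟩
      · intro x x' t t' hxx' i
        exact hX.trans (hGrel i x t) (hX.trans hxx' (hX.symm (hGrel i x' t')))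
      · intro x; funext i; exact hG0 i x
      · intro x; rfl
  refine ⟨main, sInf_le_sInf ?_⟩
  rintro c ⟨n, rfl, h⟩
  exact ⟨n, rfl, main n h⟩
end

section
/- Let (X, F_X) be a stratified space, and A, B ⊆ X with A a B-SND, i.e., A has an open neighborhood N admitting a stratified homotopy G : N × I → X with G(x,0) = x and G(x,1) ∈ B. Then Ocat(X, B, F_X) ≤ Whcat(X, A, F_X). -/
open unitInterval

/-- if `A` is a `B`-SND (it has an open neighborhood `N` with a stratified
deformation of `N` into `B`), then `Ocat(X,B,F_X) ≤ Whcat(X,A,F_X)`. -/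
theorem ocat_le_whcat_of_SND {X : Type} [TopologicalSpace X]
    (rX : X → X → Prop) (hX : Equivalence rX)
    (hpc : ∀ x : X, IsPathConnected {x' | rX x x'}) (A B : Set X)
    (N : Set X) (hNopen : IsOpen N) (hAN : A ⊆ N) (hSND : ACat rX B N) :
    (∀ n : ℕ, WhcatLe rX A n → OcatLe rX B n) ∧ Ocat rX B ≤ Whcat rX A := by
  obtain ⟨G, ⟨hGc, hGs⟩, hG0, hG1⟩ := hSND
  have main : ∀ n : ℕ, WhcatLe rX A n → OcatLe rX B n := by
    rintro n ⟨r, ⟨hrc, hrs⟩, hrFat, H, ⟨hHc, hHs⟩, hH0, hH1⟩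
    refine ⟨fun i => (fun x => r x i) ⁻¹' N,
      fun i => hNopen.preimage ((continuous_apply i).comp hrc), ?_, ?_⟩
    · intro x
      obtain ⟨k, hk⟩ := hrFat x
      exact ⟨k, hAN hk⟩
    · intro i
      set U : Set X := (fun x => r x i) ⁻¹' N with hU
      -- clamp into the unit interval
      set d : ℝ → I := fun s => Set.projIcc (0:ℝ) 1 zero_le_one s with hd
      have hdc : Continuous d := continuous_projIcc
      have hd0 : d 0 = 0 := Set.projIcc_left _
      have hd1 : d 1 = 1 := Set.projIcc_right _
      -- the concatenated homotopy
      set K : U × I → X := fun p =>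
        if (p.2 : ℝ) ≤ 1/2 then H ((p.1 : X), d (2 * (p.2 : ℝ))) i
        else G (⟨r (p.1 : X) i, p.1.2⟩, d (2 * (p.2 : ℝ) - 1)) with hK
      -- each value of K lies in the stratum of x
      have hrx : ∀ x : U, rX (r (x : X) i) (x : X) := by
        intro x
        have := hHs (x : X) (x : X) 1 0 (hX.refl _) i
        rw [hH1, hH0] at this
        exact this
      have hKx : ∀ (x : U) (t : I), rX (K (x, t)) (x : X) := by
        intro x t
        by_cases ht : (t : ℝ) ≤ 1/2
        · have := hHs (x : X) (x : X) (d (2 * (t : ℝ))) 0 (hX.refl _) i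
          rw [hH0] at this
          simp only [hK, ht, if_pos]
          exact this
        · have hyy : relInduced rX N ⟨r (x : X) i, x.2⟩ ⟨r (x : X) i, x.2⟩ :=
            mem_connectedComponentIn ⟨x.2, hX.refl _⟩
          have h1 := hGs ⟨r (x : X) i, x.2⟩ ⟨r (x : X) i, x.2⟩
            (d (2 * (t : ℝ) - 1)) 0 hyy
          rw [hG0] at h1
          simp only [hK, ht, if_neg, not_false_iff]
          exact hX.trans h1 (hrx x)
      refine ⟨K, ⟨?_, ?_⟩, ?_, ?_⟩
      · -- continuity
        apply Continuous.if_le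
        · exact (continuous_apply i).comp (hHc.comp
            ((continuous_subtype_val.comp continuous_fst).prodMk
              (hdc.comp (continuous_const.mul (continuous_subtype_val.comp continuous_snd)))))
        · refine hGc.comp (Continuous.prodMk ?_ ?_)
          · exact Continuous.subtype_mk ((continuous_apply i).comp
              (hrc.comp (continuous_subtype_val.comp continuous_fst))) _
          · exact hdc.comp
              ((continuous_const.mul (continuous_subtype_val.comp continuous_snd)).sub
                continuous_const)
        · exact continuous_subtype_val.comp continuous_snd
        · exact continuous_const
        · intro p hp
          have h2 : 2 * (p.2 : ℝ) = 1 := by rw [hp]; ring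
          have h2' : 2 * (p.2 : ℝ) - 1 = 0 := by rw [hp]; ring
          rw [h2', h2, hd0, hd1, hH1, hG0]
      · -- stratified
        intro x x' t t' hrel
        have hxx' : rX (x : X) (x' : X) :=
          (connectedComponentIn_subset _ _ hrel).2
        exact hX.trans (hKx x t) (hX.trans hxx' (hX.symm (hKx x' t')))
      · -- at time 0
        intro x
        have h0 : ((0 : I) : ℝ) ≤ 1/2 := by norm_num
        have h2 : 2 * ((0 : I) : ℝ) = 0 := by norm_num
        simp only [hK, h0, if_pos, h2, hd0, hH0]
      · -- at time 1
        intro x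
        have h1 : ¬ ((1 : I) : ℝ) ≤ 1/2 := by norm_num
        have h2 : 2 * ((1 : I) : ℝ) - 1 = 1 := by norm_num
        simp only [hK, h1, if_neg, not_false_iff, h2, hd1]
        exact hG1 _
  refine ⟨main, ?_⟩
  apply sInf_le_sInf
  rintro c ⟨n, rfl, h⟩
  exact ⟨n, rfl, main n h⟩
end

section
/- The invariant Ocat(X, F_X) = inf { Ocat(X, A, F_X) : A ⋔ F_X } is a stratified homotopy invariant: if f : X → X' is a stratified map with a stratified homotopy inverse, then Ocat(X, F_X) = Ocat(X', F_{X'}). -/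
open unitInterval

/-- The open LS-category of a stratified space: the infimum of `Ocat(X, A, F_X)` over all
subsets `A` transverse to the stratification (countable trace on each stratum). -/
noncomputable def OcatSpace {X : Type} [TopologicalSpace X] (rX : X → X → Prop) : ℕ∞ :=
  sInf {c : ℕ∞ | ∃ (n : ℕ) (A : Set X), c = (n : ℕ∞) ∧
    (∀ x : X, (A ∩ {y | rX x y}).Countable) ∧ OcatLe rX A n}

/-- Auxiliary: a stratified homotopy equivalence reflects strata. -/
lemma strat_pullback_aux {X X' : Type} [TopologicalSpace X] [TopologicalSpace X']
    (rX : X → X → Prop) (rX' : X' → X' → Prop)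
    (hX : Equivalence rX)
    (f : X → X') (g : X' → X) (hg : IsStratMap rX' rX g)
    (Hgf : X × I → X) (hHgf : IsStratHomotopy rX rX Hgf)
    (hgf0 : ∀ x, Hgf (x, 0) = g (f x)) (hgf1 : ∀ x, Hgf (x, 1) = x) :
    ∀ x y : X, rX' (f x) (f y) → rX x y := by
  have key : ∀ x : X, rX (g (f x)) x := by
    intro x
    have h := hHgf.2 x x 0 1 (hX.refl x)
    rwa [hgf0, hgf1] at h
  intro x y h
  exact hX.trans (hX.symm (key x)) (hX.trans (hg.2 _ _ h) (key y))

/-- Auxiliary: `A`-categorical sets pull back to `f(A)`-categorical sets along the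
homotopy inverse. -/
lemma acat_pullback_aux {X X' : Type} [TopologicalSpace X] [TopologicalSpace X']
    (rX : X → X → Prop) (rX' : X' → X' → Prop)
    (hX : Equivalence rX) (hX' : Equivalence rX')
    (f : X → X') (g : X' → X) (hf : IsStratMap rX rX' f) (hg : IsStratMap rX' rX g)
    (Hfg : X' × I → X') (hHfg : IsStratHomotopy rX' rX' Hfg)
    (hfg0 : ∀ y, Hfg (y, 0) = f (g y)) (hfg1 : ∀ y, Hfg (y, 1) = y)
    (A U : Set X) (hA : ACat rX A U) : ACat rX' (f '' A) (g ⁻¹' U) := by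
  obtain ⟨Hc, hHc, hc0, hc1⟩ := hA
  set V : Set X' := g ⁻¹' U with hV
  -- the inclusion of V
  let e0 : C(V, X') := ⟨fun v => (v : X'), continuous_subtype_val⟩
  let e1 : C(V, X') := ⟨fun v => f (g (v : X')),
    hf.1.comp (hg.1.comp continuous_subtype_val)⟩
  let u : V → U := fun v => ⟨g (v : X'), v.2⟩
  have hu_cont : Continuous u := Continuous.subtype_mk (hg.1.comp continuous_subtype_val) _
  let e2 : C(V, X') := ⟨fun v => f (Hc (u v, 1)),
    hf.1.comp (hHc.1.comp (Continuous.prodMk hu_cont continuous_const))⟩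
  -- first homotopy : from inclusion to f ∘ g, by reversing Hfg
  let F1 : ContinuousMap.Homotopy e0 e1 :=
    { toFun := fun (p : I × V) => Hfg ((p.2 : X'), σ p.1)
      continuous_toFun := hHfg.1.comp
        (Continuous.prodMk (continuous_subtype_val.comp continuous_snd)
          (continuous_symm.comp continuous_fst))
      map_zero_left := fun v => by simp only [unitInterval.symm_zero, hfg1]; rfl
      map_one_left := fun v => by simp only [unitInterval.symm_one, hfg0]; rfl }
  -- second homotopy : f composed with Hc precomposed with g
  let F2 : ContinuousMap.Homotopy e1 e2 :=
    { toFun := fun (p : I × V) => f (Hc (u p.2, p.1))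
      continuous_toFun := hf.1.comp (hHc.1.comp
        (Continuous.prodMk (hu_cont.comp continuous_snd) continuous_fst))
      map_zero_left := fun v => by
        have : Hc (u v, 0) = ((u v : U) : X) := hc0 (u v)
        simp only [this]; rfl
      map_one_left := fun v => rfl }
  let F := F1.trans F2
  have hreflU : ∀ w : U, relInduced rX U w w := by
    intro w
    exact mem_connectedComponentIn ⟨w.2, hX.refl (w : X)⟩
  have hfgv : ∀ v : V, rX' (v : X') (f (g (v : X'))) := by
    intro v
    have h := hHfg.2 (v : X') (v : X') 1 0 (hX'.refl _)
    rwa [hfg0, hfg1] at h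
  have gen1 : ∀ (v : V) (s : I), rX' (v : X') (F1 (s, v)) := by
    intro v s
    have h := hHfg.2 (v : X') (v : X') 1 (σ s) (hX'.refl _)
    rw [hfg1] at h
    exact h
  have gen2 : ∀ (v : V) (s : I), rX' (v : X') (F2 (s, v)) := by
    intro v s
    have h := hHc.2 (u v) (u v) 0 s (hreflU (u v))
    rw [hc0] at h
    exact hX'.trans (hfgv v) (hf.2 _ _ h)
  -- every point stays in its stratum along F
  have hkey : ∀ (v : V) (t : I), rX' (v : X') (F (t, v)) := by
    intro v t
    rw [ContinuousMap.Homotopy.trans_apply]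
    split_ifs with ht
    · exact gen1 v _
    · exact gen2 v _
  refine ⟨fun p => F (p.2, p.1), ⟨F.continuous.comp
      (Continuous.prodMk continuous_snd continuous_fst), ?_⟩, ?_, ?_⟩
  · intro v v' t t' hrel
    have hvv' : rX' (v : X') (v' : X') :=
      (connectedComponentIn_subset _ _ hrel).2
    exact hX'.trans (hX'.symm (hkey v t)) (hX'.trans hvv' (hkey v' t'))
  · intro v
    show F (0, v) = (v : X')
    exact F.apply_zero v
  · intro v
    have h1 : F (1, v) = f (Hc (u v, 1)) := F.apply_one v
    show F (1, v) ∈ f '' A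
    rw [h1]
    exact ⟨Hc (u v, 1), hc1 (u v), rfl⟩

/-- Auxiliary: one inequality. -/
lemma ocatSpace_le_aux {X X' : Type} [TopologicalSpace X] [TopologicalSpace X']
    (rX : X → X → Prop) (rX' : X' → X' → Prop)
    (hX : Equivalence rX) (hX' : Equivalence rX')
    (f : X → X') (hfwe : IsStratWeakEquiv rX rX' f) :
    OcatSpace rX' ≤ OcatSpace rX := by
  obtain ⟨hf, g, hg, ⟨Hfg, hHfg, hfg0, hfg1⟩, ⟨Hgf, hHgf, hgf0, hgf1⟩⟩ := hfwe
  apply sInf_le_sInf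
  rintro c ⟨n, A, rfl, hAt, U, hUo, hUc, hUA⟩
  refine ⟨n, f '' A, rfl, ?_, ?_⟩
  · -- transversality of f '' A
    intro x'
    by_cases h : (f '' A ∩ {y | rX' x' y}).Nonempty
    · obtain ⟨b, ⟨a, haA, rfl⟩, hb⟩ := h
      have hsub : f '' A ∩ {y | rX' x' y} ⊆ f '' (A ∩ {y | rX a y}) := by
        rintro z ⟨⟨c, hcA, rfl⟩, hz⟩
        have hac : rX a c :=
          strat_pullback_aux rX rX' hX f g hg Hgf hHgf hgf0 hgf1 a c
            (hX'.trans (hX'.symm hb) hz)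
        exact ⟨c, ⟨hcA, hac⟩, rfl⟩
      exact ((hAt a).image f).mono hsub
    · rw [Set.not_nonempty_iff_eq_empty] at h
      rw [h]
      exact Set.countable_empty
  · -- the cover pulled back along g
    refine ⟨fun i => g ⁻¹' (U i), fun i => (hUo i).preimage hg.1,
      fun x' => hUc (g x'), fun i => ?_⟩
    exact acat_pullback_aux rX rX' hX hX' f g hf hg Hfg hHfg hfg0 hfg1 A (U i) (hUA i)

/-- `Ocat(X, F_X)` is a stratified homotopy invariant. -/
theorem ocatSpace_homotopy_invariant {X X' : Type}
    [TopologicalSpace X] [TopologicalSpace X']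
    (rX : X → X → Prop) (rX' : X' → X' → Prop)
    (hX : Equivalence rX) (hX' : Equivalence rX')
    (hpcX : ∀ x : X, IsPathConnected {y | rX x y})
    (hpcX' : ∀ x : X', IsPathConnected {y | rX' x y})
    (f : X → X') (hfwe : IsStratWeakEquiv rX rX' f) :
    OcatSpace rX = OcatSpace rX' := by
  obtain ⟨hf, g, hg, hfg, hgf⟩ := hfwe
  have hgwe : IsStratWeakEquiv rX' rX g := ⟨hg, f, hf, hgf, hfg⟩
  exact le_antisymm
    (ocatSpace_le_aux rX' rX hX' hX g hgwe)
    (ocatSpace_le_aux rX rX' hX hX' f ⟨hf, g, hg, hfg, hgf⟩)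
end

section
/- Let (M, F_M) be a manifold with a C⁰-foliation and let A ⊆ M be a subset such that A ∩ L is at most countable for every leaf L. If U ⊆ M is open and H : U × [0,1] → M is a stratified (leafwise/tangential) homotopy with H(x,0) = x and H(x,1) ∈ A for all x, then H(-,1) is constant on each connected component of each set U ∩ L (L a leaf), i.e., U is tangentially categorical. -/
open unitInterval

/-- on a foliated manifold (a manifold stratified by path-connected
leaves), if `A` meets every leaf in an at most countable set and `H` is a stratified
homotopy on an open set `U` from the inclusion to a map with values in `A`, then the
time-one map `H(-,1)` is constant on each connected component of each `U ∩ L`, i.e. `U`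
is tangentially categorical. -/
theorem tangentially_categorical_of_deformation_into_countable_transversal
    {n : ℕ} {M : Type} [TopologicalSpace M] [T2Space M]
    [ChartedSpace (EuclideanSpace ℝ (Fin n)) M]
    (rM : M → M → Prop) (hM : Equivalence rM)
    (hpc : ∀ x : M, IsPathConnected {y | rM x y})
    (A : Set M) (hA : ∀ x : M, (A ∩ {y | rM x y}).Countable)
    (U : Set M) (hU : IsOpen U) (H : U × I → M)
    (hH : IsStratHomotopy (relInduced rM U) rM H)
    (h0 : ∀ x : U, H (x, 0) = (x : M)) (h1 : ∀ x : U, H (x, 1) ∈ A) :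
    ∀ x x' : U, relInduced rM U x x' → H (x, 1) = H (x', 1) := by
  intro x x' hrel
  haveI : LocallyCompactSpace M := ChartedSpace.locallyCompactSpace (EuclideanSpace ℝ (Fin n)) M
  set S : Set M := {y | y ∈ U ∧ rM (x : M) y} with hSdef
  have hxS : (x : M) ∈ S := ⟨x.2, hM.refl _⟩
  set C := connectedComponentIn S (x : M) with hCdef
  have hCS : C ⊆ S := connectedComponentIn_subset _ _
  have hCU : C ⊆ U := fun y hy => (hCS hy).1
  have hxC : (x : M) ∈ C := mem_connectedComponentIn hxS
  have hx'C : (x' : M) ∈ C := hrel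
  have hconn : IsConnected C := isConnected_connectedComponentIn_iff.mpr hxS
  -- the time-one map restricted to C
  let f : C → M := fun y => H (Set.inclusion hCU y, 1)
  have hfc : Continuous f :=
    hH.1.comp ((continuous_inclusion hCU).prodMk continuous_const)
  have hmem : ∀ y : C, f y ∈ A ∩ {z | rM (x : M) z} := by
    intro y
    refine ⟨h1 _, ?_⟩
    have hy : relInduced rM U x (Set.inclusion hCU y) := y.2
    have := hH.2 x (Set.inclusion hCU y) 0 1 hy
    rwa [h0 x] at this
  -- the countable target subspace
  set B : Set M := A ∩ {z | rM (x : M) z} with hBdef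
  have hBc : B.Countable := hA (x : M)
  haveI : Countable B := hBc.to_subtype
  haveI : LindelofSpace B := isLindelof_iff_LindelofSpace.mp hBc.isLindelof
  haveI : NormalSpace B := NormalSpace.of_regularSpace_lindelofSpace
  -- the map into B
  let f' : C → B := fun y => ⟨f y, hmem y⟩
  have hf'c : Continuous f' := hfc.subtype_mk _
  haveI : ConnectedSpace C := Subtype.connectedSpace hconn
  -- suppose the two values differ
  by_contra hne
  set a : B := f' ⟨(x : M), hxC⟩ with ha
  set b : B := f' ⟨(x' : M), hx'C⟩ with hb
  have hab : a ≠ b := by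
    intro h
    exact hne (congrArg Subtype.val h)
  obtain ⟨g, hg0, hg1, -⟩ :=
    exists_continuous_zero_one_of_isClosed (isClosed_singleton (x := a))
      (isClosed_singleton (x := b)) (Set.disjoint_singleton.mpr hab)
  -- the composite C → ℝ has connected range containing 0 and 1
  have hgc : Continuous (fun y : C => g (f' y)) := g.continuous.comp hf'c
  have hr : IsPreconnected (Set.range fun y : C => g (f' y)) :=
    (isConnected_range hgc).isPreconnected
  have h0r : (0 : ℝ) ∈ Set.range fun y : C => g (f' y) :=
    ⟨⟨(x : M), hxC⟩, hg0 rfl⟩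
  have h1r : (1 : ℝ) ∈ Set.range fun y : C => g (f' y) :=
    ⟨⟨(x' : M), hx'C⟩, hg1 rfl⟩
  have hIcc : Set.Icc (0 : ℝ) 1 ⊆ Set.range fun y : C => g (f' y) :=
    hr.Icc_subset h0r h1r
  have hcr : (Set.range fun y : C => g (f' y)).Countable := by
    have : (Set.range fun y : C => g (f' y)) ⊆ g '' Set.univ := by
      rintro - ⟨y, rfl⟩; exact ⟨f' y, trivial, rfl⟩
    exact (Set.countable_univ.image g).mono this
  have : (Set.Icc (0 : ℝ) 1).Countable := hcr.mono hIcc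
  have hle := this.le_aleph0
  rw [Cardinal.mk_Icc_real one_pos] at hle
  exact absurd hle (not_le.mpr Cardinal.aleph0_lt_continuum)
end
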